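/- For discrete random variables T^v and T^l and any positive measurable function f, the NWJ lower bound holds: I(T^v; T^l) ≥ E_{p(t^v,t^l)}[log f(t^v,t^l)] − (1/e)·E_{p(t^v)p(t^l)}[f(t^v,t^l)]. -/

import Mathlib

open scoped BigOperators

/-- A probability distribution on a finite sample space. -/
structure FinProb (Ω : Type) [Fintype Ω] where
  p : Ω → ℝ
  nonneg : ∀ ω, 0 ≤ p ω
  sum_one : ∑ ω, p ω = 1

/-- Probability that a discrete random variable `X` takes the value `a`. -/
noncomputable def probOf {Ω α : Type} [Fintype Ω] [Fintype α] [DecidableEq α]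
    (μ : FinProb Ω) (X : Ω → α) (a : α) : ℝ :=
  ∑ ω, if X ω = a then μ.p ω else 0

/-- Shannon entropy of a discrete random variable. -/
noncomputable def entropy {Ω α : Type} [Fintype Ω] [Fintype α] [DecidableEq α]
    (μ : FinProb Ω) (X : Ω → α) : ℝ :=
  ∑ a, Real.negMulLog (probOf μ X a)

/-- Conditional Shannon entropy `H(X|Y) = H(X,Y) - H(Y)`. -/
noncomputable def condEntropy {Ω α β : Type} [Fintype Ω] [Fintype α] [DecidableEq α]
    [Fintype β] [DecidableEq β] (μ : FinProb Ω) (X : Ω → α) (Y : Ω → β) : ℝ :=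
  entropy μ (fun ω => (X ω, Y ω)) - entropy μ Y

/-- Mutual information `I(X;Z) = H(X) + H(Z) - H(X,Z)`. -/
noncomputable def mutualInfo {Ω α β : Type} [Fintype Ω] [Fintype α] [DecidableEq α]
    [Fintype β] [DecidableEq β] (μ : FinProb Ω) (X : Ω → α) (Z : Ω → β) : ℝ :=
  entropy μ X + entropy μ Z - entropy μ (fun ω => (X ω, Z ω))

/-- Conditional mutual information `I(X;Z|Y) = H(X|Y) + H(Z|Y) - H(X,Z|Y)`. -/
noncomputable def condMutualInfo {Ω α β γ : Type} [Fintype Ω] [Fintype α] [DecidableEq α]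
    [Fintype β] [DecidableEq β] [Fintype γ] [DecidableEq γ]
    (μ : FinProb Ω) (X : Ω → α) (Z : Ω → β) (Y : Ω → γ) : ℝ :=
  condEntropy μ X Y + condEntropy μ Z Y - condEntropy μ (fun ω => (X ω, Z ω)) Y

/-- Conditional probability `p(t|x)` of `T = t` given `X = x`. -/
noncomputable def condProb {Ω α β : Type} [Fintype Ω] [Fintype α] [DecidableEq α]
    [Fintype β] [DecidableEq β] (μ : FinProb Ω) (T : Ω → β) (X : Ω → α) (t : β) (x : α) : ℝ :=
  probOf μ (fun ω => (T ω, X ω)) (t, x) / probOf μ X x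

/-- Expected KL divergence `KL(p(t|x₁) ‖ q(t|x₂))` between two channels sharing a
representation space, averaged over the joint law of `(X₁, X₂)`. -/
noncomputable def klChannels {Ω α₁ α₂ γ : Type} [Fintype Ω] [Fintype α₁] [DecidableEq α₁]
    [Fintype α₂] [DecidableEq α₂] [Fintype γ] [DecidableEq γ] (μ : FinProb Ω)
    (T₁ : Ω → γ) (X₁ : Ω → α₁) (T₂ : Ω → γ) (X₂ : Ω → α₂) : ℝ :=
  ∑ x : α₁ × α₂, probOf μ (fun ω => (X₁ ω, X₂ ω)) x *
    ∑ t : γ, condProb μ T₁ X₁ t x.1 *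
      Real.log (condProb μ T₁ X₁ t x.1 / condProb μ T₂ X₂ t x.2)

lemma probOf_nonneg {Ω α : Type} [Fintype Ω] [Fintype α] [DecidableEq α]
    (μ : FinProb Ω) (X : Ω → α) (a : α) : 0 ≤ probOf μ X a := by
  unfold probOf
  refine Finset.sum_nonneg fun ω _ => ?_
  split
  · exact μ.nonneg ω
  · exact le_refl 0

lemma marg_fst {Ω α β : Type} [Fintype Ω] [Fintype α] [DecidableEq α]
    [Fintype β] [DecidableEq β] (μ : FinProb Ω) (X : Ω → α) (Y : Ω → β) (a : α) :
    ∑ b, probOf μ (fun ω => (X ω, Y ω)) (a, b) = probOf μ X a := by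
  unfold probOf
  rw [Finset.sum_comm]
  refine Finset.sum_congr rfl fun ω _ => ?_
  by_cases h : X ω = a <;> simp [h, Prod.ext_iff]

lemma marg_snd {Ω α β : Type} [Fintype Ω] [Fintype α] [DecidableEq α]
    [Fintype β] [DecidableEq β] (μ : FinProb Ω) (X : Ω → α) (Y : Ω → β) (b : β) :
    ∑ a, probOf μ (fun ω => (X ω, Y ω)) (a, b) = probOf μ Y b := by
  unfold probOf
  rw [Finset.sum_comm]
  refine Finset.sum_congr rfl fun ω _ => ?_
  by_cases h : Y ω = b <;> simp [h, Prod.ext_iff]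

lemma probOf_pair_le_fst {Ω α β : Type} [Fintype Ω] [Fintype α] [DecidableEq α]
    [Fintype β] [DecidableEq β] (μ : FinProb Ω) (X : Ω → α) (Y : Ω → β) (a : α) (b : β) :
    probOf μ (fun ω => (X ω, Y ω)) (a, b) ≤ probOf μ X a := by
  rw [← marg_fst μ X Y a]
  exact Finset.single_le_sum (fun b' _ => probOf_nonneg μ _ (a, b')) (Finset.mem_univ b)

lemma probOf_pair_le_snd {Ω α β : Type} [Fintype Ω] [Fintype α] [DecidableEq α]
    [Fintype β] [DecidableEq β] (μ : FinProb Ω) (X : Ω → α) (Y : Ω → β) (a : α) (b : β) :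
    probOf μ (fun ω => (X ω, Y ω)) (a, b) ≤ probOf μ Y b := by
  rw [← marg_snd μ X Y b]
  exact Finset.single_le_sum (fun a' _ => probOf_nonneg μ _ (a', b)) (Finset.mem_univ a)

lemma nwj_pointwise (j m c : ℝ) (hj : 0 < j) (hm : 0 < m) (hc : 0 < c) :
    j * Real.log c - m * c / Real.exp 1 ≤ j * Real.log j - j * Real.log m := by
  set u := j * Real.exp 1 / (m * c) with hu_def
  have he : (0:ℝ) < Real.exp 1 := Real.exp_pos 1
  have hu : 0 < u := by positivity
  have hlog : 1 - 1 / u ≤ Real.log u := by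
    have h := Real.log_le_sub_one_of_pos (show (0:ℝ) < 1 / u by positivity)
    rw [Real.log_div one_ne_zero (ne_of_gt hu), Real.log_one] at h
    linarith
  have hlogu : Real.log u = Real.log j + 1 - Real.log m - Real.log c := by
    rw [hu_def, Real.log_div (by positivity) (by positivity),
      Real.log_mul (ne_of_gt hj) (ne_of_gt he),
      Real.log_mul (ne_of_gt hm) (ne_of_gt hc), Real.log_exp]
    ring
  have h1u : j * (1 / u) = m * c / Real.exp 1 := by
    rw [hu_def]
    field_simp
  have := mul_le_mul_of_nonneg_left hlog (le_of_lt hj)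
  rw [hlogu] at this
  nlinarith [this, h1u]

/-- NWJ (Nguyen–Wainwright–Jordan) variational lower bound: for any strictly positive
critic `f`, `I(Tᵛ;Tˡ) ≥ E_{p(tᵛ,tˡ)}[log f] − (1/e)·E_{p(tᵛ)p(tˡ)}[f]`. -/
theorem nwj_lower_bound {Ω α β : Type} [Fintype Ω]
    [Fintype α] [DecidableEq α] [Fintype β] [DecidableEq β]
    (μ : FinProb Ω) (Tv : Ω → α) (Tl : Ω → β)
    (f : α → β → ℝ) (hf : ∀ a b, 0 < f a b) :
    mutualInfo μ Tv Tl ≥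
      (∑ a, ∑ b, probOf μ (fun ω => (Tv ω, Tl ω)) (a, b) * Real.log (f a b)) -
        (1 / Real.exp 1) * ∑ a, ∑ b, probOf μ Tv a * probOf μ Tl b * f a b := by
  set J := fun (a : α) (b : β) => probOf μ (fun ω => (Tv ω, Tl ω)) (a, b) with hJ
  set Pv := fun (a : α) => probOf μ Tv a with hPv
  set Pl := fun (b : β) => probOf μ Tl b with hPl
  have hJnn : ∀ a b, 0 ≤ J a b := fun a b => probOf_nonneg μ _ (a, b)
  have hPvnn : ∀ a, 0 ≤ Pv a := fun a => probOf_nonneg μ _ a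
  have hPlnn : ∀ b, 0 ≤ Pl b := fun b => probOf_nonneg μ _ b
  have hI : mutualInfo μ Tv Tl = ∑ a, ∑ b,
      (J a b * Real.log (J a b) - J a b * Real.log (Pv a) - J a b * Real.log (Pl b)) := by
    unfold mutualInfo entropy
    have h1 : ∑ a, Real.negMulLog (probOf μ Tv a)
        = ∑ a, ∑ b, -(J a b * Real.log (Pv a)) := by
      refine Finset.sum_congr rfl fun a _ => ?_
      have : ∑ b, -(J a b * Real.log (Pv a)) = -((∑ b, J a b) * Real.log (Pv a)) := by
        rw [Finset.sum_mul, ← Finset.sum_neg_distrib]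
      rw [this, marg_fst μ Tv Tl a, Real.negMulLog, neg_mul]
    have h2 : ∑ b, Real.negMulLog (probOf μ Tl b)
        = ∑ a, ∑ b, -(J a b * Real.log (Pl b)) := by
      rw [Finset.sum_comm]
      refine Finset.sum_congr rfl fun b _ => ?_
      have : ∑ a, -(J a b * Real.log (Pl b)) = -((∑ a, J a b) * Real.log (Pl b)) := by
        rw [Finset.sum_mul, ← Finset.sum_neg_distrib]
      rw [this, marg_snd μ Tv Tl b, Real.negMulLog, neg_mul]
    have h3 : ∑ x : α × β, Real.negMulLog (probOf μ (fun ω => (Tv ω, Tl ω)) x)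
        = ∑ a, ∑ b, -(J a b * Real.log (J a b)) := by
      rw [Fintype.sum_prod_type]
      refine Finset.sum_congr rfl fun a _ => Finset.sum_congr rfl fun b _ => ?_
      rw [Real.negMulLog, neg_mul]
    rw [h1, h2, h3, ← Finset.sum_add_distrib, ← Finset.sum_sub_distrib]
    refine Finset.sum_congr rfl fun a _ => ?_
    rw [← Finset.sum_add_distrib, ← Finset.sum_sub_distrib]
    refine Finset.sum_congr rfl fun b _ => ?_
    ring
  rw [ge_iff_le, hI, Finset.mul_sum, ← Finset.sum_sub_distrib]
  refine Finset.sum_le_sum fun a _ => ?_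
  rw [Finset.mul_sum, ← Finset.sum_sub_distrib]
  refine Finset.sum_le_sum fun b _ => ?_
  show J a b * Real.log (f a b) - 1 / Real.exp 1 * (Pv a * Pl b * f a b) ≤
    J a b * Real.log (J a b) - J a b * Real.log (Pv a) - J a b * Real.log (Pl b)
  rcases eq_or_lt_of_le (hJnn a b) with h0 | hpos
  · rw [← h0]
    have : (0:ℝ) ≤ 1 / Real.exp 1 * (Pv a * Pl b * f a b) := by
      have := hPvnn a; have := hPlnn b; have := (hf a b).le
      positivity
    simp only [zero_mul, zero_sub, sub_zero]
    linarith
  · have hPva : 0 < Pv a := lt_of_lt_of_le hpos (probOf_pair_le_fst μ Tv Tl a b)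
    have hPlb : 0 < Pl b := lt_of_lt_of_le hpos (probOf_pair_le_snd μ Tv Tl a b)
    have key := nwj_pointwise (J a b) (Pv a * Pl b) (f a b) hpos (by positivity) (hf a b)
    rw [Real.log_mul (ne_of_gt hPva) (ne_of_gt hPlb)] at key
    have he : (0:ℝ) < Real.exp 1 := Real.exp_pos 1
    have : 1 / Real.exp 1 * (Pv a * Pl b * f a b) = Pv a * Pl b * f a b / Real.exp 1 := by
      field_simp
    nlinarith [key]
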